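/- Polynomials a, b, c ∈ ℝ[x,y] satisfy the equivariance condition B(R_θ p) = R_θ B(p) R_θᵀ for all p ∈ ℝ² and all θ ∈ [0, 2π) (where B(p) = [[c(p), b(p)], [b(p), a(p)]] and R_θ is the rotation matrix of angle θ) if and only if there exist polynomials q₁, q₂, q₃ in one variable such that, with pᵢ = qᵢ(x² + y²), one has a = p₁ + (y² − x²)p₂ + 2xy·p₃, b = 2xy·p₂ + (x² − y²)p₃, and c = p₁ + (x² − y²)p₂ − 2xy·p₃. -/

import Mathlib

open Matrix

/-- The rotation matrix of angle `θ`. -/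
noncomputable def rotMat (θ : ℝ) : Matrix (Fin 2) (Fin 2) ℝ :=
  !![Real.cos θ, -Real.sin θ; Real.sin θ, Real.cos θ]

/-- The symmetric-matrix-valued map `B(p) = [[c(p), b(p)], [b(p), a(p)]]` of a quadratic
differential form with polynomial coefficients `a, b, c ∈ ℝ[x,y]`. -/
noncomputable def bdeMatrix (a b c : MvPolynomial (Fin 2) ℝ) (p : Fin 2 → ℝ) :
    Matrix (Fin 2) (Fin 2) ℝ :=
  !![MvPolynomial.eval p c, MvPolynomial.eval p b;
     MvPolynomial.eval p b, MvPolynomial.eval p a]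

/-- `Re((x + iy)^m)` evaluated at `(x, y) = (v 0, v 1)`. -/
noncomputable def rePow (m : ℕ) (v : Fin 2 → ℝ) : ℝ :=
  (((v 0 : ℂ) + Complex.I * (v 1 : ℂ)) ^ m).re

/-- `Im((x + iy)^m)` evaluated at `(x, y) = (v 0, v 1)`. -/
noncomputable def imPow (m : ℕ) (v : Fin 2 → ℝ) : ℝ :=
  (((v 0 : ℂ) + Complex.I * (v 1 : ℂ)) ^ m).im

open Polynomial in
lemma aux_coeff_comp_neg_X {R : Type*} [CommRing R] (p : Polynomial R) (n : ℕ) :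
    (p.comp (-X)).coeff n = (-1)^n * p.coeff n := by
  induction p using Polynomial.induction_on' with
  | add p q hp hq => simp [add_comp, hp, hq, mul_add]
  | monomial k a =>
      have h1 : ((-1 : Polynomial R))^k = C ((-1)^k) := by simp
      rw [Polynomial.monomial_comp, neg_pow, h1, ← mul_assoc, ← Polynomial.C_mul]
      simp only [Polynomial.coeff_C_mul, Polynomial.coeff_X_pow, Polynomial.coeff_monomial,
        mul_ite, mul_one, mul_zero]
      rcases eq_or_ne n k with h|h
      · subst h; simp [mul_comm]
      · simp [h, Ne.symm h]

open Polynomial in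
lemma aux_even_comp_sq {R : Type*} [Field R] [CharZero R] (p : Polynomial R)
    (hcomp : p.comp (-X) = p) :
    ∃ q : Polynomial R, ∀ x : R, q.eval (x^2) = p.eval x := by
  have hodd : ∀ n, Odd n → p.coeff n = 0 := by
    intro n hn
    have h2 := aux_coeff_comp_neg_X p n
    rw [hcomp, hn.neg_one_pow, neg_one_mul] at h2
    linear_combination h2 / 2
  refine ⟨contract 2 p, fun x => ?_⟩
  have hpq : expand R 2 (contract 2 p) = p := by
    ext n
    rw [coeff_expand (by norm_num)]
    split_ifs with hd
    · rw [coeff_contract (by norm_num), Nat.div_mul_cancel hd]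
    · exact (hodd n (Nat.odd_iff.mpr (by omega : n % 2 = 1))).symm
  conv_rhs => rw [← hpq]
  rw [expand_eval]

open Polynomial in
lemma aux_exists_re_im (w : Polynomial ℂ) :
    ∃ s t : Polynomial ℝ, ∀ x : ℝ, w.eval (x:ℂ) = ↑(s.eval x) + Complex.I * ↑(t.eval x) := by
  refine ⟨∑ k ∈ Finset.range (w.natDegree+1), C ((w.coeff k).re) * X^k,
          ∑ k ∈ Finset.range (w.natDegree+1), C ((w.coeff k).im) * X^k, fun x => ?_⟩
  rw [Polynomial.eval_eq_sum_range]
  simp only [eval_finset_sum, eval_mul, eval_C, eval_pow, eval_X]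
  push_cast
  rw [Finset.mul_sum, ← Finset.sum_add_distrib]
  refine Finset.sum_congr rfl fun k _ => ?_
  linear_combination ((x:ℂ))^k * (Complex.re_add_im (w.coeff k)).symm

lemma aux_eval_line (p : MvPolynomial (Fin 2) ℝ) (r : ℝ) :
    Polynomial.eval r (MvPolynomial.aeval ![Polynomial.X, 0] p) = MvPolynomial.eval ![r, 0] p := by
  have h := MvPolynomial.comp_aeval_apply (f := ![(Polynomial.X : Polynomial ℝ), 0])
    (Polynomial.aeval r) p
  have h2 : (Polynomial.aeval r) (MvPolynomial.aeval ![(Polynomial.X : Polynomial ℝ), 0] p)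
      = Polynomial.eval r (MvPolynomial.aeval ![Polynomial.X, 0] p) := by
    simp [Polynomial.aeval_def, Polynomial.eval₂_eq_eval_map]
  rw [← h2, h]
  have h3 : (fun i => (Polynomial.aeval r) (![(Polynomial.X : Polynomial ℝ), 0] i)) = ![r, 0] := by
    funext i
    fin_cases i <;> simp
  rw [h3, ← MvPolynomial.coe_aeval_eq_eval]
  rfl

lemma aux_entries (a b c : MvPolynomial (Fin 2) ℝ)
    (h : ∀ θ ∈ Set.Ico (0 : ℝ) (2 * Real.pi), ∀ p : Fin 2 → ℝ,
      bdeMatrix a b c ((rotMat θ).mulVec p)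
        = rotMat θ * bdeMatrix a b c p * (rotMat θ)ᵀ) :
    ∀ θ : ℝ, ∀ x y : ℝ,
      (MvPolynomial.eval ![Real.cos θ * x - Real.sin θ * y, Real.sin θ * x + Real.cos θ * y] a
        = Real.sin θ^2 * MvPolynomial.eval ![x,y] c
          + 2 * Real.sin θ * Real.cos θ * MvPolynomial.eval ![x,y] b
          + Real.cos θ^2 * MvPolynomial.eval ![x,y] a) ∧
      (MvPolynomial.eval ![Real.cos θ * x - Real.sin θ * y, Real.sin θ * x + Real.cos θ * y] b
        = Real.sin θ * Real.cos θ * (MvPolynomial.eval ![x,y] c - MvPolynomial.eval ![x,y] a)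
          + (Real.cos θ^2 - Real.sin θ^2) * MvPolynomial.eval ![x,y] b) ∧
      (MvPolynomial.eval ![Real.cos θ * x - Real.sin θ * y, Real.sin θ * x + Real.cos θ * y] c
        = Real.cos θ^2 * MvPolynomial.eval ![x,y] c
          - 2 * Real.sin θ * Real.cos θ * MvPolynomial.eval ![x,y] b
          + Real.sin θ^2 * MvPolynomial.eval ![x,y] a) := by
  have base : ∀ θ ∈ Set.Ico (0 : ℝ) (2 * Real.pi), ∀ x y : ℝ,
      (MvPolynomial.eval ![Real.cos θ * x - Real.sin θ * y, Real.sin θ * x + Real.cos θ * y] a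
        = Real.sin θ^2 * MvPolynomial.eval ![x,y] c
          + 2 * Real.sin θ * Real.cos θ * MvPolynomial.eval ![x,y] b
          + Real.cos θ^2 * MvPolynomial.eval ![x,y] a) ∧
      (MvPolynomial.eval ![Real.cos θ * x - Real.sin θ * y, Real.sin θ * x + Real.cos θ * y] b
        = Real.sin θ * Real.cos θ * (MvPolynomial.eval ![x,y] c - MvPolynomial.eval ![x,y] a)
          + (Real.cos θ^2 - Real.sin θ^2) * MvPolynomial.eval ![x,y] b) ∧
      (MvPolynomial.eval ![Real.cos θ * x - Real.sin θ * y, Real.sin θ * x + Real.cos θ * y] c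
        = Real.cos θ^2 * MvPolynomial.eval ![x,y] c
          - 2 * Real.sin θ * Real.cos θ * MvPolynomial.eval ![x,y] b
          + Real.sin θ^2 * MvPolynomial.eval ![x,y] a) := by
    intro θ hθ x y
    have hmv : (rotMat θ).mulVec ![x, y]
        = ![Real.cos θ * x - Real.sin θ * y, Real.sin θ * x + Real.cos θ * y] := by
      funext i
      fin_cases i <;> simp [rotMat, Matrix.mulVec, Fin.sum_univ_two, dotProduct, Matrix.vecHead, Matrix.vecTail] <;> ring
    have H := h θ hθ ![x, y]
    rw [hmv] at H
    have h00 := congrFun (congrFun H 0) 0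
    have h01 := congrFun (congrFun H 0) 1
    have h11 := congrFun (congrFun H 1) 1
    simp only [bdeMatrix, rotMat, Matrix.mul_apply, Fin.sum_univ_two, Matrix.transpose_apply,
      Matrix.of_apply, Matrix.cons_val_zero, Matrix.cons_val_one, Matrix.head_cons,
      Matrix.cons_val_fin_one, Matrix.head_fin_const] at h00 h01 h11
    exact ⟨by linear_combination h11, by linear_combination h01, by linear_combination h00⟩
  intro θ x y
  have hmem := toIcoMod_mem_Ico' Real.two_pi_pos θ
  have hcos : Real.cos (toIcoMod Real.two_pi_pos 0 θ) = Real.cos θ := by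
    rw [toIcoMod, zsmul_eq_mul]
    exact Real.cos_sub_int_mul_two_pi θ _
  have hsin : Real.sin (toIcoMod Real.two_pi_pos 0 θ) = Real.sin θ := by
    rw [toIcoMod, zsmul_eq_mul]
    exact Real.sin_sub_int_mul_two_pi θ _
  have := base _ hmem x y
  rwa [hcos, hsin] at this

/-- general form of `SO(2)`-equivariant quadratic differential forms:
`B(R_θ p) = R_θ B(p) R_θᵀ` for all `θ ∈ [0, 2π)` iff, with `pᵢ = qᵢ(x² + y²)` for
one-variable polynomials `q₁, q₂, q₃`, one has `a = p₁ + (y² − x²)p₂ + 2xy·p₃`,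
`b = 2xy·p₂ + (x² − y²)p₃`, `c = p₁ + (x² − y²)p₂ − 2xy·p₃`. -/
theorem so2_equivariant_quadratic_forms (a b c : MvPolynomial (Fin 2) ℝ) :
    (∀ θ ∈ Set.Ico (0 : ℝ) (2 * Real.pi), ∀ p : Fin 2 → ℝ,
      bdeMatrix a b c ((rotMat θ).mulVec p)
        = rotMat θ * bdeMatrix a b c p * (rotMat θ)ᵀ)
    ↔ ∃ q₁ q₂ q₃ : Polynomial ℝ,
        (∀ v : Fin 2 → ℝ, MvPolynomial.eval v a
          = Polynomial.eval (v 0 ^ 2 + v 1 ^ 2) q₁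
            + (v 1 ^ 2 - v 0 ^ 2) * Polynomial.eval (v 0 ^ 2 + v 1 ^ 2) q₂
            + 2 * v 0 * v 1 * Polynomial.eval (v 0 ^ 2 + v 1 ^ 2) q₃) ∧
        (∀ v : Fin 2 → ℝ, MvPolynomial.eval v b
          = 2 * v 0 * v 1 * Polynomial.eval (v 0 ^ 2 + v 1 ^ 2) q₂
            + (v 0 ^ 2 - v 1 ^ 2) * Polynomial.eval (v 0 ^ 2 + v 1 ^ 2) q₃) ∧
        (∀ v : Fin 2 → ℝ, MvPolynomial.eval v c
          = Polynomial.eval (v 0 ^ 2 + v 1 ^ 2) q₁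
            + (v 0 ^ 2 - v 1 ^ 2) * Polynomial.eval (v 0 ^ 2 + v 1 ^ 2) q₂
            - 2 * v 0 * v 1 * Polynomial.eval (v 0 ^ 2 + v 1 ^ 2) q₃) := by
  constructor
  · intro h
    have key := aux_entries a b c h
    -- the trace is rotation invariant
    have hF : ∀ θ x y : ℝ,
        MvPolynomial.eval ![Real.cos θ * x - Real.sin θ * y, Real.sin θ * x + Real.cos θ * y] a
          + MvPolynomial.eval ![Real.cos θ * x - Real.sin θ * y, Real.sin θ * x + Real.cos θ * y] c
        = MvPolynomial.eval ![x,y] a + MvPolynomial.eval ![x,y] c := by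
      intro θ x y
      obtain ⟨h1, h2, h3⟩ := key θ x y
      linear_combination h1 + h3
        + (MvPolynomial.eval ![x,y] a + MvPolynomial.eval ![x,y] c) * Real.sin_sq_add_cos_sq θ
    -- complex equivariance of (a-c) + i 2b
    have hG : ∀ θ x y : ℝ,
        ((MvPolynomial.eval ![Real.cos θ * x - Real.sin θ * y, Real.sin θ * x + Real.cos θ * y] a : ℂ)
            - (MvPolynomial.eval ![Real.cos θ * x - Real.sin θ * y, Real.sin θ * x + Real.cos θ * y] c : ℂ))
          + Complex.I * (2 * (MvPolynomial.eval ![Real.cos θ * x - Real.sin θ * y, Real.sin θ * x + Real.cos θ * y] b : ℂ))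
        = ((Real.cos θ : ℂ) - Complex.I * (Real.sin θ : ℂ))^2 *
            (((MvPolynomial.eval ![x,y] a : ℂ) - (MvPolynomial.eval ![x,y] c : ℂ))
              + Complex.I * (2 * (MvPolynomial.eval ![x,y] b : ℂ))) := by
      intro θ x y
      obtain ⟨h1, h2, h3⟩ := key θ x y
      have c1 := congrArg (fun r : ℝ => (r : ℂ)) h1
      have c2 := congrArg (fun r : ℝ => (r : ℂ)) h2
      have c3 := congrArg (fun r : ℝ => (r : ℂ)) h3
      push_cast at c1 c2 c3
      simp only [← Complex.ofReal_cos, ← Complex.ofReal_sin] at c1 c2 c3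
      linear_combination c1 - c3 + 2*Complex.I*c2 +
        (-(Real.sin θ:ℂ)^2 * ((MvPolynomial.eval ![x,y] a : ℂ) - (MvPolynomial.eval ![x,y] c : ℂ))
          + 2*(Real.sin θ:ℂ)*(Real.cos θ:ℂ) * (2*(MvPolynomial.eval ![x,y] b : ℂ))
          - Complex.I*(Real.sin θ:ℂ)^2 * (2*(MvPolynomial.eval ![x,y] b : ℂ))) * Complex.I_sq
    -- polynomial along the x-axis for the trace
    obtain ⟨uF, huF⟩ : ∃ uF : Polynomial ℝ, ∀ r : ℝ,
        uF.eval r = MvPolynomial.eval ![r,0] a + MvPolynomial.eval ![r,0] c :=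
      ⟨MvPolynomial.aeval ![Polynomial.X, 0] a + MvPolynomial.aeval ![Polynomial.X, 0] c,
        fun r => by rw [Polynomial.eval_add, aux_eval_line, aux_eval_line]⟩
    -- complex polynomial along the x-axis for (a-c) + i 2b
    obtain ⟨uG, huG⟩ : ∃ uG : Polynomial ℂ, ∀ r : ℝ,
        uG.eval (r:ℂ) = ((MvPolynomial.eval ![r,0] a : ℂ) - (MvPolynomial.eval ![r,0] c : ℂ))
          + Complex.I * (2 * (MvPolynomial.eval ![r,0] b : ℂ)) := by
      have hmapeval : ∀ (q : Polynomial ℝ) (r : ℝ),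
          (q.map (algebraMap ℝ ℂ)).eval (r:ℂ) = ↑(q.eval r) := by
        intro q r
        rw [Polynomial.eval_map]
        exact Polynomial.eval₂_at_apply _ r
      refine ⟨Polynomial.map (algebraMap ℝ ℂ) (MvPolynomial.aeval ![Polynomial.X, 0] a
            - MvPolynomial.aeval ![Polynomial.X, 0] c)
          + Polynomial.C Complex.I * Polynomial.map (algebraMap ℝ ℂ)
            (Polynomial.C 2 * MvPolynomial.aeval ![Polynomial.X, 0] b),
        fun r => ?_⟩
      rw [Polynomial.eval_add, Polynomial.eval_mul, Polynomial.eval_C, hmapeval, hmapeval,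
        Polynomial.eval_sub, Polynomial.eval_mul, Polynomial.eval_C, aux_eval_line,
        aux_eval_line, aux_eval_line]
      push_cast
      ring
    -- evenness of uF
    have hFcomp : uF.comp (-Polynomial.X) = uF := by
      apply Polynomial.eq_of_infinite_eval_eq
      apply Set.infinite_of_injective_forall_mem (f := fun r : ℝ => r)
        (Function.injective_id)
      intro r
      simp only [Set.mem_setOf_eq, Polynomial.eval_comp, Polynomial.eval_neg, Polynomial.eval_X,
        id_eq]
      have hpt := hF Real.pi r 0
      simp only [Real.cos_pi, Real.sin_pi] at hpt
      norm_num at hpt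
      rw [huF, huF]
      exact hpt
    obtain ⟨wF, hwF⟩ := aux_even_comp_sq uF hFcomp
    -- the trace everywhere
    have claimF : ∀ x y : ℝ, MvPolynomial.eval ![x,y] a + MvPolynomial.eval ![x,y] c
        = wF.eval (x^2 + y^2) := by
      intro x y
      by_cases h0 : x = 0 ∧ y = 0
      · obtain ⟨rfl, rfl⟩ := h0
        rw [show (0:ℝ)^2 + (0:ℝ)^2 = (0:ℝ)^2 by norm_num, hwF 0, huF 0]
      · have hz : (x:ℂ) + (y:ℂ)*Complex.I ≠ 0 := by
          intro hc
          apply h0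
          constructor
          · simpa using congrArg Complex.re hc
          · simpa using congrArg Complex.im hc
        set r := ‖((x:ℂ) + (y:ℂ)*Complex.I)‖ with hrdef
        set θ := Complex.arg ((x:ℂ) + (y:ℂ)*Complex.I) with hθdef
        have h1 : ((x:ℂ) + (y:ℂ)*Complex.I) = ↑r * Complex.exp (↑θ * Complex.I) :=
          (Complex.norm_mul_exp_arg_mul_I _).symm
        rw [Complex.exp_mul_I, ← Complex.ofReal_cos, ← Complex.ofReal_sin] at h1
        have hx : x = r * Real.cos θ := by
          have := congrArg Complex.re h1
          simpa [Complex.cos_ofReal_re] using this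
        have hy : y = r * Real.sin θ := by
          have := congrArg Complex.im h1
          simpa [Complex.sin_ofReal_re] using this
        have hr2 : r^2 = x^2 + y^2 := by
          rw [hrdef, Complex.sq_norm]
          simpa using Complex.normSq_add_mul_I x y
        have hpt := hF θ r 0
        have e1 : Real.cos θ * r - Real.sin θ * 0 = x := by
          rw [mul_zero, sub_zero, mul_comm]; exact hx.symm
        have e2 : Real.sin θ * r + Real.cos θ * 0 = y := by
          rw [mul_zero, add_zero, mul_comm]; exact hy.symm
        rw [e1, e2] at hpt
        rw [hpt, ← huF r, ← hwF r, hr2]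
    -- the value of G at the origin vanishes
    have hG00 : ((MvPolynomial.eval ![(0:ℝ),(0:ℝ)] a : ℂ) - (MvPolynomial.eval ![(0:ℝ),(0:ℝ)] c : ℂ))
        + Complex.I * (2 * (MvPolynomial.eval ![(0:ℝ),(0:ℝ)] b : ℂ)) = 0 := by
      have hpt := hG (Real.pi/2) 0 0
      simp only [Real.cos_pi_div_two, Real.sin_pi_div_two] at hpt
      norm_num at hpt
      linear_combination hpt/2
    -- evenness of uG
    have hGcomp : uG.comp (-Polynomial.X) = uG := by
      apply Polynomial.eq_of_infinite_eval_eq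
      apply Set.infinite_of_injective_forall_mem (f := fun r : ℝ => (r:ℂ))
        Complex.ofReal_injective
      intro r
      simp only [Set.mem_setOf_eq, Polynomial.eval_comp, Polynomial.eval_neg, Polynomial.eval_X]
      have hcast : (-(r:ℂ)) = ((-r : ℝ):ℂ) := by push_cast; ring
      rw [hcast, huG, huG]
      have hpt := hG Real.pi r 0
      simp only [Real.cos_pi, Real.sin_pi] at hpt
      norm_num at hpt
      exact hpt
    obtain ⟨wG, hwG2⟩ := aux_even_comp_sq uG hGcomp
    have hwG0 : wG.eval 0 = 0 := by
      have h00 := hwG2 0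
      norm_num at h00
      rw [h00, show (0:ℂ) = ((0:ℝ):ℂ) by norm_num, huG 0]
      exact hG00
    obtain ⟨w₀, hw₀⟩ : Polynomial.X ∣ wG :=
      Polynomial.X_dvd_iff.mpr (by rw [Polynomial.coeff_zero_eq_eval_zero]; exact hwG0)
    have claimG : ∀ x y : ℝ,
        ((MvPolynomial.eval ![x,y] a : ℂ) - (MvPolynomial.eval ![x,y] c : ℂ))
          + Complex.I * (2 * (MvPolynomial.eval ![x,y] b : ℂ))
        = ((x:ℂ) - Complex.I * (y:ℂ))^2 * w₀.eval (((x:ℝ)^2 + (y:ℝ)^2 : ℝ) : ℂ) := by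
      intro x y
      by_cases h0 : x = 0 ∧ y = 0
      · obtain ⟨rfl, rfl⟩ := h0
        rw [hG00]
        norm_num
      · have hz : (x:ℂ) + (y:ℂ)*Complex.I ≠ 0 := by
          intro hc
          apply h0
          constructor
          · simpa using congrArg Complex.re hc
          · simpa using congrArg Complex.im hc
        set r := ‖((x:ℂ) + (y:ℂ)*Complex.I)‖ with hrdef
        set θ := Complex.arg ((x:ℂ) + (y:ℂ)*Complex.I) with hθdef
        have h1 : ((x:ℂ) + (y:ℂ)*Complex.I) = ↑r * Complex.exp (↑θ * Complex.I) :=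
          (Complex.norm_mul_exp_arg_mul_I _).symm
        rw [Complex.exp_mul_I, ← Complex.ofReal_cos, ← Complex.ofReal_sin] at h1
        have hx : x = r * Real.cos θ := by
          have := congrArg Complex.re h1
          simpa [Complex.cos_ofReal_re] using this
        have hy : y = r * Real.sin θ := by
          have := congrArg Complex.im h1
          simpa [Complex.sin_ofReal_re] using this
        have hr2 : r^2 = x^2 + y^2 := by
          rw [hrdef, Complex.sq_norm]
          simpa using Complex.normSq_add_mul_I x y
        have hpt := hG θ r 0
        have e1 : Real.cos θ * r - Real.sin θ * 0 = x := by
          rw [mul_zero, sub_zero, mul_comm]; exact hx.symm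
        have e2 : Real.sin θ * r + Real.cos θ * 0 = y := by
          rw [mul_zero, add_zero, mul_comm]; exact hy.symm
        rw [e1, e2] at hpt
        rw [← huG r, ← hwG2 (r:ℂ), hw₀, Polynomial.eval_mul, Polynomial.eval_X] at hpt
        have hrc : ((r:ℂ))^2 = (((x:ℝ)^2 + (y:ℝ)^2 : ℝ) : ℂ) := by
          rw [← Complex.ofReal_pow, hr2]
        rw [hrc] at hpt
        rw [hpt]
        have hc : ((x:ℂ) - Complex.I * (y:ℂ)) = ↑r * (↑(Real.cos θ) - Complex.I * ↑(Real.sin θ)) := by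
          rw [hx, hy]; push_cast; ring
        rw [hc, ← hrc]
        ring
    obtain ⟨s, t, hst⟩ := aux_exists_re_im w₀
    have comps : ∀ x y : ℝ,
        (MvPolynomial.eval ![x,y] a - MvPolynomial.eval ![x,y] c
          = (x^2 - y^2) * s.eval (x^2+y^2) + 2*x*y * t.eval (x^2+y^2))
        ∧ (2 * MvPolynomial.eval ![x,y] b
          = (x^2 - y^2) * t.eval (x^2+y^2) - 2*x*y * s.eval (x^2+y^2)) := by
      intro x y
      have h2 : ((MvPolynomial.eval ![x,y] a : ℂ) - (MvPolynomial.eval ![x,y] c : ℂ))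
          + Complex.I * (2 * (MvPolynomial.eval ![x,y] b : ℂ))
          = (((x^2 - y^2) * Polynomial.eval (x^2+y^2) s + 2*x*y * Polynomial.eval (x^2+y^2) t : ℝ) : ℂ)
            + Complex.I * (((x^2 - y^2) * Polynomial.eval (x^2+y^2) t - 2*x*y * Polynomial.eval (x^2+y^2) s : ℝ) : ℂ) := by
        rw [claimG x y, hst (x^2+y^2)]
        push_cast
        linear_combination ((y:ℂ)^2 * ((Polynomial.eval (x^2+y^2) s : ℝ) + Complex.I*((Polynomial.eval (x^2+y^2) t : ℝ) : ℂ))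
          - 2*(x:ℂ)*(y:ℂ)*((Polynomial.eval (x^2+y^2) t : ℝ) : ℂ)) * Complex.I_sq
      constructor
      · have := congrArg Complex.re h2
        simpa [← Complex.ofReal_pow] using this
      · have := congrArg Complex.im h2
        simpa [← Complex.ofReal_pow] using this
    refine ⟨Polynomial.C (1/2) * wF, Polynomial.C (-(1/2)) * s, Polynomial.C (1/2) * t, ?_, ?_, ?_⟩
    · intro v
      obtain ⟨hg1, hg2⟩ := comps (v 0) (v 1)
      have hf := claimF (v 0) (v 1)
      have hv : ![v 0, v 1] = v := by funext i; fin_cases i <;> rfl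
      rw [hv] at hg1 hg2 hf
      simp only [Polynomial.eval_mul, Polynomial.eval_C]
      linarith
    · intro v
      obtain ⟨hg1, hg2⟩ := comps (v 0) (v 1)
      have hv : ![v 0, v 1] = v := by funext i; fin_cases i <;> rfl
      rw [hv] at hg1 hg2
      simp only [Polynomial.eval_mul, Polynomial.eval_C]
      linarith
    · intro v
      obtain ⟨hg1, hg2⟩ := comps (v 0) (v 1)
      have hf := claimF (v 0) (v 1)
      have hv : ![v 0, v 1] = v := by funext i; fin_cases i <;> rfl
      rw [hv] at hg1 hg2 hf
      simp only [Polynomial.eval_mul, Polynomial.eval_C]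
      linarith
  · rintro ⟨q₁, q₂, q₃, ha, hb, hc⟩
    intro θ hθ p
    have pyth := Real.sin_sq_add_cos_sq θ
    have hmv : (rotMat θ).mulVec p
        = ![Real.cos θ * p 0 - Real.sin θ * p 1, Real.sin θ * p 0 + Real.cos θ * p 1] := by
      funext i
      fin_cases i <;> simp [rotMat, Matrix.mulVec, Fin.sum_univ_two, dotProduct, Matrix.vecHead, Matrix.vecTail] <;> ring
    rw [hmv]
    have hA' := ha ![Real.cos θ * p 0 - Real.sin θ * p 1, Real.sin θ * p 0 + Real.cos θ * p 1]
    have hB' := hb ![Real.cos θ * p 0 - Real.sin θ * p 1, Real.sin θ * p 0 + Real.cos θ * p 1]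
    have hC' := hc ![Real.cos θ * p 0 - Real.sin θ * p 1, Real.sin θ * p 0 + Real.cos θ * p 1]
    simp only [Matrix.cons_val_zero, Matrix.cons_val_one, Matrix.head_cons] at hA' hB' hC'
    have hrr : (Real.cos θ * p 0 - Real.sin θ * p 1)^2 + (Real.sin θ * p 0 + Real.cos θ * p 1)^2
        = p 0^2 + p 1^2 := by
      linear_combination (p 0^2 + p 1^2) * pyth
    rw [hrr] at hA' hB' hC'
    have hA := ha p
    have hB := hb p
    have hC := hc p
    apply Matrix.ext
    intro i j
    fin_cases i <;> fin_cases j <;>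
      simp only [bdeMatrix, rotMat, Matrix.mul_apply, Fin.sum_univ_two, Matrix.transpose_apply,
        Fin.mk_zero, Fin.mk_one, Matrix.of_apply, Matrix.cons_val_zero, Matrix.cons_val_one,
        Matrix.head_cons, Matrix.cons_val_fin_one, Matrix.head_fin_const]
    · linear_combination hC' - Real.cos θ^2 * hC - Real.sin θ^2 * hA + 2*Real.sin θ*Real.cos θ * hB
        - (Polynomial.eval (p 0^2 + p 1^2) q₁) * pyth
    · linear_combination hB' - Real.sin θ*Real.cos θ * hC + Real.sin θ*Real.cos θ * hA
        - (Real.cos θ^2 - Real.sin θ^2) * hB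
    · linear_combination hB' - Real.sin θ*Real.cos θ * hC + Real.sin θ*Real.cos θ * hA
        - (Real.cos θ^2 - Real.sin θ^2) * hB
    · linear_combination hA' - Real.sin θ^2 * hC - Real.cos θ^2 * hA - 2*Real.sin θ*Real.cos θ * hB
        - (Polynomial.eval (p 0^2 + p 1^2) q₁) * pyth
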